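/- arXiv:2101.12747 — 2 statements merged into one kernel-verified Lean document; each statement's English description precedes it below -/
import Mathlib

section
/- Let u be a fixed nonempty finite binary word with length ℓ and height h, and set Φ(u) := −φ(u)/3^h ∈ ℤ₂. Then the set of all x ∈ ℤ₂ such that the prefix of length ℓ of the parity vector of x equals u is exactly {Φ(u) + (2^ℓ/3^h)·y : y ∈ ℤ₂}. -/
/-- Height of a finite binary word: the number of `1`s (`true`s). -/
def wordHeight (u : List Bool) : ℕ := u.count true

/-- Auxiliary function realizing the recursion of `φ` on the reversed word. -/
def phiAux : List Bool → ℕ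
  | [] => 0
  | b :: r => if b then 3 * phiAux r + 2 ^ r.length else phiAux r

/-- The function `φ` on finite binary words: `φ(ε)=0`, `φ(u0)=φ(u)`,
`φ(u1)=3φ(u)+2^{ℓ(u)}`. -/
def phi (u : List Bool) : ℕ := phiAux u.reverse

/-- The prefix of length `ℓ` of the parity vector of `x ∈ ℤ₂` under the map `T`:
its `k`-th digit is `T^k(x) mod 2`. -/
noncomputable def parityPrefix (T : ℤ_[2] → ℤ_[2]) (x : ℤ_[2]) (ℓ : ℕ) : List Bool :=
  (List.range ℓ).map fun k => decide (PadicInt.toZMod (T^[k] x) = 1)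

lemma parityPrefix_succ (T : ℤ_[2] → ℤ_[2]) (x : ℤ_[2]) (ℓ : ℕ) :
    parityPrefix T x (ℓ+1)
      = parityPrefix T x ℓ ++ [decide (PadicInt.toZMod (T^[ℓ] x) = 1)] := by
  simp [parityPrefix, List.range_succ]

lemma phi_append (w : List Bool) (b : Bool) :
    phi (w ++ [b]) = if b then 3 * phi w + 2 ^ w.length else phi w := by
  simp [phi, phiAux]

lemma wordHeight_append (w : List Bool) (b : Bool) :
    wordHeight (w ++ [b]) = wordHeight w + if b then 1 else 0 := by
  cases b <;> simp [wordHeight]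

lemma isUnit3 : IsUnit (3 : ℤ_[2]) := by
  rw [PadicInt.isUnit_iff]
  have h1 : ‖((3:ℤ) : ℤ_[2])‖ ≤ 1 := PadicInt.norm_le_one _
  have h2 : ¬ ‖((3:ℤ) : ℤ_[2])‖ < 1 := by
    rw [PadicInt.norm_int_lt_one_iff_dvd]; decide
  have : ((3:ℤ) : ℤ_[2]) = 3 := by norm_cast
  rw [this] at h1 h2
  exact le_antisymm h1 (le_of_not_gt h2)

lemma toZMod_two : PadicInt.toZMod (2 : ℤ_[2]) = 0 := by
  have : ((2:ℕ) : ℤ_[2]) = 2 := by norm_cast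
  rw [← this, map_natCast]
  decide

lemma toZMod_three : PadicInt.toZMod (3 : ℤ_[2]) = 1 := by
  have : ((3:ℕ) : ℤ_[2]) = 3 := by norm_cast
  rw [← this, map_natCast]
  decide

lemma lemA (T : ℤ_[2] → ℤ_[2])
    (hT : ∀ x : ℤ_[2], 2 * T x = if PadicInt.toZMod x = 1 then 3 * x + 1 else x)
    (u : List Bool) (x : ℤ_[2]) (h : parityPrefix T x u.length = u) :
    (2:ℤ_[2]) ^ u.length * T^[u.length] x
      = 3 ^ wordHeight u * x + (phi u : ℤ_[2]) := by
  induction u using List.reverseRecOn generalizing x with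
  | nil => simp [phi, phiAux, wordHeight]
  | append_singleton w b ih =>
    simp only [List.length_append, List.length_singleton] at h ⊢
    rw [parityPrefix_succ] at h
    obtain ⟨h1, h2⟩ := List.append_inj' h rfl
    have hd : decide (PadicInt.toZMod (T^[w.length] x) = 1) = b := by simpa using h2
    have E := ih x h1
    have key : (2:ℤ_[2])^(w.length+1) * T^[w.length+1] x
        = 2^w.length * (2 * T (T^[w.length] x)) := by
      rw [Function.iterate_succ_apply']; ring
    rw [key, hT]
    cases b with
    | true =>
      have hc : PadicInt.toZMod (T^[w.length] x) = 1 := of_decide_eq_true hd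
      have Hphi : phi (w ++ [true]) = 3 * phi w + 2 ^ w.length := by simp [phi_append]
      have Hh : wordHeight (w ++ [true]) = wordHeight w + 1 := by simp [wordHeight_append]
      rw [if_pos hc, Hphi, Hh]
      push_cast
      linear_combination 3 * E
    | false =>
      have hc : ¬ PadicInt.toZMod (T^[w.length] x) = 1 := of_decide_eq_false hd
      have Hphi : phi (w ++ [false]) = phi w := by simp [phi_append]
      have Hh : wordHeight (w ++ [false]) = wordHeight w := by simp [wordHeight_append]
      rw [if_neg hc, Hphi, Hh]
      linear_combination E

lemma mainLemma (T : ℤ_[2] → ℤ_[2])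
    (hT : ∀ x : ℤ_[2], 2 * T x = if PadicInt.toZMod x = 1 then 3 * x + 1 else x)
    (u : List Bool) (x : ℤ_[2]) :
    parityPrefix T x u.length = u ↔
      (2:ℤ_[2]) ^ u.length ∣ 3 ^ wordHeight u * x + (phi u : ℤ_[2]) := by
  constructor
  · intro h
    exact ⟨T^[u.length] x, (lemA T hT u x h).symm⟩
  · induction u using List.reverseRecOn generalizing x with
    | nil => intro _; simp [parityPrefix]
    | append_singleton w b ih =>
      intro hD
      obtain ⟨z, hz⟩ := hD
      simp only [List.length_append, List.length_singleton, phi_append, wordHeight_append,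
        pow_succ] at hz ⊢
      have h2ne : (2:ℤ_[2])^w.length ≠ 0 := pow_ne_zero _ two_ne_zero
      cases b with
      | false =>
        simp only [if_neg Bool.false_ne_true, add_zero, pow_zero, mul_one] at hz
        have Dw : (2:ℤ_[2])^w.length ∣ 3 ^ wordHeight w * x + (phi w : ℤ_[2]) :=
          ⟨2 * z, by rw [hz]; ring⟩
        have hpre : parityPrefix T x w.length = w := ih x Dw
        have E := lemA T hT w x hpre
        have ht : T^[w.length] x = 2 * z := by
          apply mul_left_cancel₀ h2ne
          rw [E, hz]; ring
        have hdig : PadicInt.toZMod (T^[w.length] x) = 0 := by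
          rw [ht, map_mul, toZMod_two, zero_mul]
        rw [parityPrefix_succ, hpre, hdig]
        norm_num
      | true =>
        simp only [if_pos rfl, pow_one] at hz
        push_cast at hz
        obtain ⟨c, hc⟩ := isUnit3.exists_left_inv
        have Dw : (2:ℤ_[2])^w.length ∣ 3 ^ wordHeight w * x + (phi w : ℤ_[2]) := by
          refine ⟨c * (2 * z - 1), ?_⟩
          have h3 : 3 * (3 ^ wordHeight w * x + (phi w : ℤ_[2])) = 2^w.length * (2 * z - 1) := by
            linear_combination hz
          linear_combination c * h3 + (3 ^ wordHeight w * x + (phi w : ℤ_[2])) * hc.symm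
        have hpre : parityPrefix T x w.length = w := ih x Dw
        have E := lemA T hT w x hpre
        have ht : 3 * T^[w.length] x = 2 * z - 1 := by
          apply mul_left_cancel₀ h2ne
          linear_combination 3 * E + hz
        have hdig : PadicInt.toZMod (T^[w.length] x) = 1 := by
          have := congrArg PadicInt.toZMod ht
          simp only [map_mul, map_sub, map_one, toZMod_two, toZMod_three, zero_mul, one_mul] at this
          rw [this]; decide
        rw [parityPrefix_succ, hpre, hdig]
        norm_num

/-- If `T` is the 3x+1 map on `ℤ₂`, `u` is a fixed nonempty finite binary word of
length `ℓ` and height `h`, and `Φ(u) = −φ(u)/3^h ∈ ℤ₂`, then the set of all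
`x ∈ ℤ₂` whose parity vector has `u` as its length-`ℓ` prefix is exactly
`{Φ(u) + (2^ℓ/3^h)·y : y ∈ ℤ₂}`. -/
theorem stmt5 (T : ℤ_[2] → ℤ_[2])
    (hT : ∀ x : ℤ_[2], 2 * T x = if PadicInt.toZMod x = 1 then 3 * x + 1 else x)
    (u : List Bool) (hu : u ≠ []) :
    {x : ℤ_[2] | parityPrefix T x u.length = u} =
      Set.range (fun y : ℤ_[2] =>
        -(phi u : ℤ_[2]) * Ring.inverse ((3 : ℤ_[2]) ^ wordHeight u) +
          (2 : ℤ_[2]) ^ u.length * Ring.inverse ((3 : ℤ_[2]) ^ wordHeight u) * y) := by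
  have hU : IsUnit ((3:ℤ_[2]) ^ wordHeight u) := isUnit3.pow _
  have hinv : Ring.inverse ((3:ℤ_[2]) ^ wordHeight u) * (3:ℤ_[2]) ^ wordHeight u = 1 :=
    Ring.inverse_mul_cancel _ hU
  ext x
  simp only [Set.mem_setOf_eq, Set.mem_range]
  rw [mainLemma T hT u x]
  constructor
  · rintro ⟨z, hz⟩
    refine ⟨z, ?_⟩
    linear_combination Ring.inverse ((3:ℤ_[2]) ^ wordHeight u) * hz.symm + x * hinv
  · rintro ⟨y, hy⟩
    refine ⟨y, ?_⟩
    linear_combination (3:ℤ_[2]) ^ wordHeight u * hy.symm - (phi u : ℤ_[2]) * hinv + (2:ℤ_[2]) ^ u.length * y * hinv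
end

section
/- Let u be a nonempty finite binary word with length ℓ and height h, and regard C(u) := φ(u)/(2^ℓ − 3^h) as an element of ℤ₂ (2^ℓ − 3^h is odd, hence a unit in ℤ₂). Then T^ℓ(C(u)) = C(u), and the parity vector of C(u) is the purely periodic infinite word u^∞ = uuu⋯ whose k-th digit is the (k mod ℓ)-th digit of u. -/
lemma phiAux_append (l : List Bool) (b : Bool) :
    phiAux (l ++ [b]) = 2 * phiAux l + (if b then 3 ^ l.count true else 0) := by
  induction l with
  | nil => cases b <;> simp [phiAux]
  | cons c l ih =>
      cases c <;> cases b <;>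
        simp [phiAux, ih, List.count_cons, List.length_append, pow_succ] <;> ring

lemma phi_cons (b : Bool) (v : List Bool) :
    phi (b :: v) = 2 * phi v + (if b then 3 ^ wordHeight v else 0) := by
  simp [phi, wordHeight, List.reverse_cons, phiAux_append, List.count_reverse]

lemma phi_concat (v : List Bool) (b : Bool) :
    phi (v ++ [b]) = if b then 3 * phi v + 2 ^ v.length else phi v := by
  simp [phi, List.reverse_append, phiAux]

noncomputable def Cw (u : List Bool) : ℤ_[2] :=
  (phi u : ℤ_[2]) * Ring.inverse ((2 : ℤ_[2]) ^ u.length - (3 : ℤ_[2]) ^ wordHeight u)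

lemma toZMod_D (u : List Bool) (hu : u ≠ []) :
    PadicInt.toZMod ((2 : ℤ_[2]) ^ u.length - (3 : ℤ_[2]) ^ wordHeight u) = 1 := by
  have h2 : (PadicInt.toZMod (2 : ℤ_[2]) : ZMod 2) = 0 := by
    have := map_ofNat (PadicInt.toZMod : ℤ_[2] →+* ZMod 2) 2
    exact this.trans (by decide)
  have h3 : (PadicInt.toZMod (3 : ℤ_[2]) : ZMod 2) = 1 := by
    have := map_ofNat (PadicInt.toZMod : ℤ_[2] →+* ZMod 2) 3
    exact this.trans (by decide)
  have hl : u.length ≠ 0 := by simpa using hu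
  rw [map_sub, map_pow, map_pow, h2, h3, zero_pow hl, one_pow]
  decide

lemma isUnit_D (u : List Bool) (hu : u ≠ []) :
    IsUnit ((2 : ℤ_[2]) ^ u.length - (3 : ℤ_[2]) ^ wordHeight u) := by
  by_contra h
  have hm : ((2 : ℤ_[2]) ^ u.length - (3 : ℤ_[2]) ^ wordHeight u)
      ∈ RingHom.ker (PadicInt.toZMod : ℤ_[2] →+* ZMod 2) := by
    rw [PadicInt.ker_toZMod]; exact h
  rw [RingHom.mem_ker, toZMod_D u hu] at hm
  exact one_ne_zero hm

lemma toZMod_inv_D (u : List Bool) (hu : u ≠ []) :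
    PadicInt.toZMod (Ring.inverse ((2 : ℤ_[2]) ^ u.length - (3 : ℤ_[2]) ^ wordHeight u)) = 1 := by
  have := congrArg PadicInt.toZMod
    (Ring.mul_inverse_cancel _ (isUnit_D u hu))
  rw [map_mul, toZMod_D u hu, one_mul, map_one] at this
  exact this

lemma toZMod_Cw (b : Bool) (v : List Bool) :
    PadicInt.toZMod (Cw (b :: v)) = if b then 1 else 0 := by
  rw [Cw, map_mul, toZMod_inv_D _ (by simp), mul_one, map_natCast, phi_cons]
  cases b
  · push_cast
    rw [(by decide : (2 : ZMod 2) = 0)]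
    simp
  · push_cast
    rw [(by decide : (2 : ZMod 2) = 0), (by decide : (3 : ZMod 2) = 1)]
    simp

lemma Dw_eq (u v : List Bool) (hl : u.length = v.length) (hh : wordHeight u = wordHeight v) :
    ((2 : ℤ_[2]) ^ u.length - (3 : ℤ_[2]) ^ wordHeight u)
      = (2 : ℤ_[2]) ^ v.length - (3 : ℤ_[2]) ^ wordHeight v := by rw [hl, hh]

lemma step (T : ℤ_[2] → ℤ_[2])
    (hT : ∀ x : ℤ_[2], 2 * T x = if PadicInt.toZMod x = 1 then 3 * x + 1 else x)
    (b : Bool) (v : List Bool) : T (Cw (b :: v)) = Cw (v ++ [b]) := by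
  have h2 : (2 : ℤ_[2]) ≠ 0 := by norm_num
  apply mul_left_cancel₀ h2
  have hD : ((2 : ℤ_[2]) ^ (b :: v).length - (3 : ℤ_[2]) ^ wordHeight (b :: v))
      = (2 : ℤ_[2]) ^ (v ++ [b]).length - (3 : ℤ_[2]) ^ wordHeight (v ++ [b]) := by
    apply Dw_eq
    · simp
    · cases b <;> simp [wordHeight, List.count_cons, List.count_append]
  have hu : IsUnit ((2 : ℤ_[2]) ^ (b :: v).length - (3 : ℤ_[2]) ^ wordHeight (b :: v)) :=
    isUnit_D _ (by simp)
  rw [hT, toZMod_Cw]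
  cases b with
  | false =>
      simp only [if_neg (by decide : ¬ ((0 : ZMod 2) = 1)), Bool.false_eq_true, if_false]
      rw [Cw, Cw, ← hD, phi_cons, phi_concat]
      push_cast
      ring
  | true =>
      simp only [if_pos rfl, if_true]
      rw [Cw, Cw, ← hD]
      have hwh : wordHeight (true :: v) = wordHeight v + 1 := by
        simp [wordHeight, List.count_cons]
      have key : 3 * ((phi (true :: v) : ℤ_[2])) +
          ((2 : ℤ_[2]) ^ (true :: v).length - (3 : ℤ_[2]) ^ wordHeight (true :: v)) =
          2 * (phi (v ++ [true]) : ℤ_[2]) := by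
        rw [phi_cons, phi_concat, hwh]
        simp only [if_pos rfl, List.length_cons, if_true]
        push_cast
        ring
      have h1 : (1 : ℤ_[2]) = ((2 : ℤ_[2]) ^ (true :: v).length - (3 : ℤ_[2]) ^ wordHeight (true :: v))
          * Ring.inverse ((2 : ℤ_[2]) ^ (true :: v).length - (3 : ℤ_[2]) ^ wordHeight (true :: v)) :=
        (Ring.mul_inverse_cancel _ hu).symm
      calc 3 * ((phi (true :: v) : ℤ_[2]) * Ring.inverse ((2 : ℤ_[2]) ^ (true :: v).length - (3 : ℤ_[2]) ^ wordHeight (true :: v))) + 1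
          = (3 * (phi (true :: v) : ℤ_[2]) +
              ((2 : ℤ_[2]) ^ (true :: v).length - (3 : ℤ_[2]) ^ wordHeight (true :: v)))
            * Ring.inverse ((2 : ℤ_[2]) ^ (true :: v).length - (3 : ℤ_[2]) ^ wordHeight (true :: v)) := by
            rw [h1]; ring
        _ = 2 * ((phi (v ++ [true]) : ℤ_[2]) * Ring.inverse ((2 : ℤ_[2]) ^ (true :: v).length - (3 : ℤ_[2]) ^ wordHeight (true :: v))) := by
            rw [key]; ring

lemma iterate_Cw (T : ℤ_[2] → ℤ_[2])
    (hT : ∀ x : ℤ_[2], 2 * T x = if PadicInt.toZMod x = 1 then 3 * x + 1 else x)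
    (u : List Bool) (hu : u ≠ []) (k : ℕ) : T^[k] (Cw u) = Cw (u.rotate k) := by
  induction k with
  | zero => simp
  | succ n ih =>
      rw [Function.iterate_succ_apply', ih]
      have hne : u.rotate n ≠ [] := by
        intro h
        have := congrArg List.length h
        simp at this
        exact hu this
      obtain ⟨b, v, hbv⟩ := List.exists_cons_of_ne_nil hne
      have hrot : u.rotate (n + 1) = v ++ [b] := by
        rw [← List.rotate_rotate, hbv, List.rotate_cons_succ, List.rotate_zero]
      rw [hbv, step T hT, hrot]

/-- If `T` is the 3x+1 map on `ℤ₂` and `u` is a nonempty finite binary word of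
length `ℓ` and height `h`, then `C(u) = φ(u)·(2^ℓ − 3^h)⁻¹ ∈ ℤ₂` satisfies
`T^ℓ(C(u)) = C(u)`, and the parity vector of `C(u)` is the purely periodic word
`u^∞`: its `k`-th digit `T^k(C(u)) mod 2` equals the `(k mod ℓ)`-th digit of `u`. -/
theorem stmt7 (T : ℤ_[2] → ℤ_[2])
    (hT : ∀ x : ℤ_[2], 2 * T x = if PadicInt.toZMod x = 1 then 3 * x + 1 else x)
    (u : List Bool) (hu : u ≠ []) :
    T^[u.length] ((phi u : ℤ_[2]) *
        Ring.inverse ((2 : ℤ_[2]) ^ u.length - (3 : ℤ_[2]) ^ wordHeight u)) =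
      (phi u : ℤ_[2]) * Ring.inverse ((2 : ℤ_[2]) ^ u.length - (3 : ℤ_[2]) ^ wordHeight u) ∧
    ∀ k : ℕ,
      PadicInt.toZMod (T^[k] ((phi u : ℤ_[2]) *
          Ring.inverse ((2 : ℤ_[2]) ^ u.length - (3 : ℤ_[2]) ^ wordHeight u))) =
        (if u.getD (k % u.length) false then 1 else 0) := by
  have hC : ∀ k, T^[k] (Cw u) = Cw (u.rotate k) := iterate_Cw T hT u hu
  constructor
  · have := hC u.length
    rw [List.rotate_length] at this
    simpa [Cw] using this
  · intro k
    have hk := hC k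
    have hlen : 0 < u.length := List.length_pos_iff.mpr hu
    have hne : u.rotate k ≠ [] := by
      intro h
      have := congrArg List.length h
      simp at this
      exact hu this
    obtain ⟨b, v, hbv⟩ := List.exists_cons_of_ne_nil hne
    have hlt : 0 < (u.rotate k).length := by rw [hbv]; simp
    have h0 : (u.rotate k)[0]'hlt = b := by simp [hbv]
    have h1 : (u.rotate k)[0]'hlt = u[(0 + k) % u.length]'(by
        exact Nat.mod_lt _ hlen) := List.getElem_rotate u k 0 hlt
    have hb : u.getD (k % u.length) false = b := by
      rw [List.getD_eq_getElem _ _ (Nat.mod_lt _ hlen), ← h0, h1]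
      simp
    show PadicInt.toZMod (T^[k] (Cw u)) = _
    rw [hk, hbv, toZMod_Cw, hb]
end
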